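/- If there exists any relational substitution σ with σ(L) ⊆ R, where R is recognized by a finite forest algebra (H,V) via φ, then there exists a relational substitution τ with τ(L) ⊆ R such that each τ(x) is recognized by (H,V) (namely τ = σ̂, the saturation of σ with respect to φ). Hence the existence of an arbitrary substitution satisfying σ(L) ⊆ R is equivalent to the existence of a substitution whose values are all recognized by (H,V). -/
import Mathlib


/-- Forests over an alphabet `A`. -/
inductive Forest (A : Type) : Type
  | nil : Forest A
  | cons : A → Forest A → Forest A → Forest A

namespace Forest

def append {A : Type} : Forest A → Forest A → Forest A
  | nil, g => g
  | cons a c f, g => cons a c (append f g)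

end Forest

/-- Application of a relational substitution `σ : X → 2^{F(A)}` to a forest over
`A ∪ X`. -/
def Subst {A X : Type} (σ : X → Set (Forest A)) : Forest (Sum A X) → Set (Forest A)
  | .nil => {Forest.nil}
  | .cons (Sum.inl a) c f =>
      {h | ∃ c' ∈ Subst σ c, ∃ f' ∈ Subst σ f, h = Forest.cons a c' f'}
  | .cons (Sum.inr x) c f =>
      {h | c = Forest.nil ∧ ∃ s ∈ σ x, ∃ f' ∈ Subst σ f, h = Forest.append s f'}

/-- `σ(L) = ⋃_{g∈L} σ(g)`. -/
def SubstL {A X : Type} (σ : X → Set (Forest A)) (L : Set (Forest (Sum A X))) :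
    Set (Forest A) :=
  ⋃ g ∈ L, Subst σ g

/-- The forest-algebra homomorphism from `F(A)` into an algebra with horizontal
monoid `H`. -/
def aeval {A H : Type} [Monoid H] (act : A → H → H) : Forest A → H
  | .nil => 1
  | .cons a c f => act a (aeval act c) * aeval act f

lemma aeval_append {A H : Type} [Monoid H] (act : A → H → H) :
    ∀ s f : Forest A, aeval act (Forest.append s f) = aeval act s * aeval act f
  | .nil, f => by simp [Forest.append, aeval]
  | .cons a c s, f => by
      simp [Forest.append, aeval, aeval_append act s f, mul_assoc]

lemma subst_sat {A X H : Type} [Monoid H] (act : A → H → H)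
    (σ : X → Set (Forest A)) :
    ∀ g : Forest (Sum A X), ∀ h ∈ Subst (fun x => aeval act ⁻¹' (aeval act '' σ x)) g,
      ∃ h' ∈ Subst σ g, aeval act h' = aeval act h
  | .nil, h, hh => ⟨h, hh, rfl⟩
  | .cons (Sum.inl a) c f, h, hh => by
      obtain ⟨c', hc', f', hf', rfl⟩ := hh
      obtain ⟨c'', hc'', ec⟩ := subst_sat act σ c c' hc'
      obtain ⟨f'', hf'', ef⟩ := subst_sat act σ f f' hf'
      exact ⟨Forest.cons a c'' f'', ⟨c'', hc'', f'', hf'', rfl⟩, by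
        simp [aeval, ec, ef]⟩
  | .cons (Sum.inr x) c f, h, hh => by
      obtain ⟨rfl, s, hs, f', hf', rfl⟩ := hh
      obtain ⟨s', hs', es⟩ := hs
      obtain ⟨f'', hf'', ef⟩ := subst_sat act σ f f' hf'
      exact ⟨Forest.append s' f'', ⟨rfl, s', hs', f'', hf'', rfl⟩, by
        simp [aeval_append, es, ef]⟩

/-- if some relational substitution `σ` satisfies `σ(L) ⊆ R`, where
`R` is recognized by the forest algebra via `φ = aeval act`, then there is a
relational substitution `τ` with `τ(L) ⊆ R` each of whose values `τ(x)` is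
recognized by the same forest algebra via `φ`. -/
theorem exists_recognizable_substitution {A X H : Type} [Monoid H]
    (act : A → H → H)
    (R : Set (Forest A)) (hR : R = aeval act ⁻¹' (aeval act '' R))
    (L : Set (Forest (Sum A X)))
    (h : ∃ σ : X → Set (Forest A), SubstL σ L ⊆ R) :
    ∃ τ : X → Set (Forest A), SubstL τ L ⊆ R ∧
      ∀ x, τ x = aeval act ⁻¹' (aeval act '' τ x) := by
  obtain ⟨σ, hσ⟩ := h
  refine ⟨fun x => aeval act ⁻¹' (aeval act '' σ x), ?_, fun x => ?_⟩
  · rintro h ⟨_, ⟨g, rfl⟩, _, ⟨hg, rfl⟩, hhg⟩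
    obtain ⟨h', hh', e⟩ := subst_sat act σ g h hhg
    have hR' : h' ∈ R := hσ (Set.mem_biUnion hg hh')
    rw [hR] at hR' ⊢
    obtain ⟨r, hr, er⟩ := hR'
    exact ⟨r, hr, er.trans e⟩
  · rw [Set.image_preimage_eq_inter_range,
      Set.inter_eq_self_of_subset_left (Set.image_subset_range _ _)]
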